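/- In U = U_q(sp₄) the following four identities hold: (E_{β₃}E_{β₁})*E_{β₂} = q²E_{β₃}*E_{β₂}E_{β₁}* + q²E_{β₃}*E_{β₃} − [2]_q E_{β₂}*E_{β₂}; (E_{β₄}E_{β₁})*E_{β₃} = q²E_{β₄}*E_{β₃}E_{β₁}* + [2]_q q²E_{β₄}*E_{β₄} − q²E_{β₃}*E_{β₃}; (E_{β₃}E_{β₁})*E_{β₃}E_{β₁} = E_{β₃}*E_{β₃}E_{β₁}*E_{β₁} + [2]_q(E_{β₃}*E_{β₄}E_{β₁} − E_{β₂}*E_{β₃}E_{β₁}); (E_{β₄}E_{β₁})*E_{β₄}E_{β₁} = E_{β₄}*E_{β₄}E_{β₁}*E_{β₁} − q²E_{β₃}*E_{β₄}E_{β₁}. -/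

import Mathlib

noncomputable section

open scoped TensorProduct RealInnerProductSpace

/-- The quantum integer `[n]_q = (q^n - q^(-n))/(q - q⁻¹)`. -/
def qnum (q : ℝ) (n : ℤ) : ℝ := (q ^ n - q ^ (-n)) / (q - q⁻¹)

/-- Generators of `U_q(sp₄)` inside an arbitrary ℝ-algebra `U`, together with the
defining relations of the presented algebra `U_q(sp₄)`. -/
structure Sp4Gens (q : ℝ) (U : Type) [Ring U] [Algebra ℝ U] : Type where
  E1 : U
  E2 : U
  F1 : U
  F2 : U
  K1 : U
  K1i : U
  K2 : U
  K2i : U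
  relK1 : K1 * K1i = 1
  relK1' : K1i * K1 = 1
  relK2 : K2 * K2i = 1
  relK2' : K2i * K2 = 1
  relK12 : K1 * K2 = K2 * K1
  relK12i : K1 * K2i = K2i * K1
  relK1i2 : K1i * K2 = K2 * K1i
  relK1i2i : K1i * K2i = K2i * K1i
  relK1E1 : K1 * E1 = (q ^ (2 : ℤ)) • (E1 * K1)
  relK1E2 : K1 * E2 = (q ^ (-2 : ℤ)) • (E2 * K1)
  relK2E1 : K2 * E1 = (q ^ (-2 : ℤ)) • (E1 * K2)
  relK2E2 : K2 * E2 = (q ^ (4 : ℤ)) • (E2 * K2)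
  relK1F1 : K1 * F1 = (q ^ (-2 : ℤ)) • (F1 * K1)
  relK1F2 : K1 * F2 = (q ^ (2 : ℤ)) • (F2 * K1)
  relK2F1 : K2 * F1 = (q ^ (2 : ℤ)) • (F1 * K2)
  relK2F2 : K2 * F2 = (q ^ (-4 : ℤ)) • (F2 * K2)
  relE1F1 : E1 * F1 - F1 * E1 = (q - q⁻¹)⁻¹ • (K1 - K1i)
  relE2F2 : E2 * F2 - F2 * E2 = (q ^ (2 : ℤ) - q ^ (-2 : ℤ))⁻¹ • (K2 - K2i)
  relE1F2 : E1 * F2 = F2 * E1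
  relE2F1 : E2 * F1 = F1 * E2
  serreE1 : E1 ^ 3 * E2 - qnum q 3 • (E1 ^ 2 * E2 * E1) + qnum q 3 • (E1 * E2 * E1 ^ 2)
      - E2 * E1 ^ 3 = 0
  serreE2 : E2 ^ 2 * E1 - (q ^ (2 : ℤ) + q ^ (-2 : ℤ)) • (E2 * E1 * E2) + E1 * E2 ^ 2 = 0
  serreF1 : F1 ^ 3 * F2 - qnum q 3 • (F1 ^ 2 * F2 * F1) + qnum q 3 • (F1 * F2 * F1 ^ 2)
      - F2 * F1 ^ 3 = 0
  serreF2 : F2 ^ 2 * F1 - (q ^ (2 : ℤ) + q ^ (-2 : ℤ)) • (F2 * F1 * F2) + F1 * F2 ^ 2 = 0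

variable {q : ℝ} {U : Type} [Ring U] [Algebra ℝ U]

/-- The quantum root vector `E_{β₁} = E₁`. -/
def Eb1 (g : Sp4Gens q U) : U := g.E1

/-- The quantum root vector `E_{β₂}`. -/
def Eb2 (g : Sp4Gens q U) : U :=
  (qnum q 2)⁻¹ • (g.E1 ^ 2 * g.E2) - q⁻¹ • (g.E1 * g.E2 * g.E1)
    + (q ^ (-2 : ℤ) * (qnum q 2)⁻¹) • (g.E2 * g.E1 ^ 2)

/-- The quantum root vector `E_{β₃}`. -/
def Eb3 (g : Sp4Gens q U) : U := g.E1 * g.E2 - (q ^ (-2 : ℤ)) • (g.E2 * g.E1)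

/-- The quantum root vector `E_{β₄} = E₂`. -/
def Eb4 (g : Sp4Gens q U) : U := g.E2

/-- `E_{β₁}* = F₁K₁`, the image of `E_{β₁}` under the star anti-automorphism
(the star is the unique ℝ-linear anti-automorphism with `Eᵢ* = FᵢKᵢ`, `Fᵢ* = Kᵢ⁻¹Eᵢ`,
`Kᵢ* = Kᵢ`; on the elements below its value is forced by anti-multiplicativity). -/
def sEb1 (g : Sp4Gens q U) : U := g.F1 * g.K1

/-- `E_{β₂}*`, the image of `E_{β₂}` under the star anti-automorphism. -/
def sEb2 (g : Sp4Gens q U) : U :=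
  (qnum q 2)⁻¹ • (g.F2 * g.K2 * (g.F1 * g.K1) ^ 2)
    - q⁻¹ • (g.F1 * g.K1 * (g.F2 * g.K2) * (g.F1 * g.K1))
    + (q ^ (-2 : ℤ) * (qnum q 2)⁻¹) • ((g.F1 * g.K1) ^ 2 * (g.F2 * g.K2))

/-- `E_{β₃}*`, the image of `E_{β₃}` under the star anti-automorphism. -/
def sEb3 (g : Sp4Gens q U) : U :=
  g.F2 * g.K2 * (g.F1 * g.K1) - (q ^ (-2 : ℤ)) • (g.F1 * g.K1 * (g.F2 * g.K2))

/-- `E_{β₄}* = F₂K₂`, the image of `E_{β₄}` under the star anti-automorphism. -/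
def sEb4 (g : Sp4Gens q U) : U := g.F2 * g.K2

/-- The quantized Levi factor `U_q(𝔩)`, i.e. the unital subalgebra generated by
`E₁, F₁, K₁, K₁⁻¹, K₂, K₂⁻¹`. -/
def Uql (g : Sp4Gens q U) : Subalgebra ℝ U :=
  Algebra.adjoin ℝ {g.E1, g.F1, g.K1, g.K1i, g.K2, g.K2i}


private lemma mulx {U : Type} [Ring U] {a b c : U} (h : a * b = c) (x : U) :
    a * (b * x) = c * x := by rw [← mul_assoc, h]

private lemma conj_swap {U : Type} [Ring U] [Algebra ℝ U] {K Ki X : U}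
    (h1 : K * Ki = 1) (h2 : Ki * K = 1) {c : ℝ} (h : K * X = c • (X * K)) (hc : c ≠ 0) :
    Ki * X = c⁻¹ • (X * Ki) := by
  have key : X * Ki = c • (Ki * X) := by
    calc X * Ki = (Ki * K) * X * Ki := by rw [h2, one_mul]
      _ = Ki * (K * X) * Ki := by rw [mul_assoc Ki K X]
      _ = Ki * (c • (X * K)) * Ki := by rw [h]
      _ = c • (Ki * (X * (K * Ki))) := by simp [mul_smul_comm, smul_mul_assoc, mul_assoc]
      _ = c • (Ki * X) := by rw [h1, mul_one]
  rw [key, smul_smul, inv_mul_cancel₀ hc, one_smul]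

set_option maxHeartbeats 4000000 in
/-- the four identities of Lemma 7.2 (rewriting products such as
`(E_{β₃}E_{β₁})* E_{β₂}`; note `(E_{β₃}E_{β₁})* = E_{β₁}* E_{β₃}*`). -/
theorem rewriting_relations (hq0 : 0 < q) (hq1 : q < 1) (g : Sp4Gens q U) :
    sEb1 g * sEb3 g * Eb2 g
        = (q ^ (2 : ℤ)) • (sEb3 g * Eb2 g * sEb1 g) + (q ^ (2 : ℤ)) • (sEb3 g * Eb3 g)
          - qnum q 2 • (sEb2 g * Eb2 g) ∧
      sEb1 g * sEb4 g * Eb3 g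
        = (q ^ (2 : ℤ)) • (sEb4 g * Eb3 g * sEb1 g)
          + (qnum q 2 * q ^ (2 : ℤ)) • (sEb4 g * Eb4 g)
          - (q ^ (2 : ℤ)) • (sEb3 g * Eb3 g) ∧
      sEb1 g * sEb3 g * (Eb3 g * Eb1 g)
        = sEb3 g * Eb3 g * (sEb1 g * Eb1 g)
          + qnum q 2 • (sEb3 g * Eb4 g * Eb1 g - sEb2 g * Eb3 g * Eb1 g) ∧
      sEb1 g * sEb4 g * (Eb4 g * Eb1 g)
        = sEb4 g * Eb4 g * (sEb1 g * Eb1 g) - (q ^ (2 : ℤ)) • (sEb3 g * Eb4 g * Eb1 g) := by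
  have hq : q ≠ 0 := hq0.ne'
  have hqq1 : q * q < 1 := by nlinarith
  have hqd : q - q⁻¹ ≠ 0 := by
    intro h
    have h' : q = q⁻¹ := by linarith [sub_eq_zero.mp h]
    have h3 : q * q⁻¹ = 1 := mul_inv_cancel₀ hq
    rw [← h'] at h3
    nlinarith
  have hz2 : q ^ (2 : ℤ) = q * q := by
    rw [show (2:ℤ) = ((2:ℕ):ℤ) from rfl, zpow_natCast]; ring
  have hz2' : q ^ (-2 : ℤ) = (q * q)⁻¹ := by
    rw [zpow_neg, hz2]
  have hz4 : q ^ (4 : ℤ) = q * q * (q * q) := by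
    rw [show (4:ℤ) = ((4:ℕ):ℤ) from rfl, zpow_natCast]; ring
  have hz4' : q ^ (-4 : ℤ) = (q * q * (q * q))⁻¹ := by rw [zpow_neg, hz4]
  have hd2 : q ^ (2 : ℤ) - q ^ (-2 : ℤ) ≠ 0 := by
    rw [hz2, hz2']
    intro h
    have h' : (q * q)⁻¹ = q * q := (sub_eq_zero.mp h).symm
    have hqqpos : 0 < q * q := by positivity
    have h3 : (q * q) * (q * q)⁻¹ = 1 := mul_inv_cancel₀ hqqpos.ne'
    rw [h'] at h3
    nlinarith
  have hqn2 : qnum q 2 = q + q⁻¹ := by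
    unfold qnum
    rw [div_eq_iff hqd, hz2, hz2']
    field_simp
    ring
  have hs2 : q + q⁻¹ ≠ 0 := by positivity
  have hA : q ^ 2 - 1 ≠ 0 := by nlinarith
  have hC : q ^ 2 + 1 ≠ 0 := by positivity
  have e1 : (q - q⁻¹)⁻¹ = q * (q ^ 2 - 1)⁻¹ := by
    rw [show q - q⁻¹ = (q ^ 2 - 1) * q⁻¹ by field_simp, mul_inv, inv_inv]
    ring
  have e2 : (q * q - (q * q)⁻¹)⁻¹ = q * q * ((q ^ 2 - 1)⁻¹ * (q ^ 2 + 1)⁻¹) := by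
    rw [show q * q - (q * q)⁻¹ = ((q ^ 2 - 1) * (q ^ 2 + 1)) * (q * q)⁻¹ by field_simp; ring,
      mul_inv, mul_inv, inv_inv]
    ring
  have e4 : (q + q⁻¹)⁻¹ = q * (q ^ 2 + 1)⁻¹ := by
    rw [show q + q⁻¹ = (q ^ 2 + 1) * q⁻¹ by field_simp, mul_inv, inv_inv]
    ring
  have hz2n : q ^ (2:ℤ) ≠ 0 := zpow_ne_zero _ hq
  have hz2n' : q ^ (-2:ℤ) ≠ 0 := zpow_ne_zero _ hq
  have hz4n : q ^ (4:ℤ) ≠ 0 := zpow_ne_zero _ hq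
  have hz4n' : q ^ (-4:ℤ) ≠ 0 := zpow_ne_zero _ hq
  -- inverse-K commutation rules
  have k1iE1 := conj_swap g.relK1 g.relK1' g.relK1E1 hz2n
  have k1iE2 := conj_swap g.relK1 g.relK1' g.relK1E2 hz2n'
  have k2iE1 := conj_swap g.relK2 g.relK2' g.relK2E1 hz2n'
  have k2iE2 := conj_swap g.relK2 g.relK2' g.relK2E2 hz4n
  have k1iF1 := conj_swap g.relK1 g.relK1' g.relK1F1 hz2n'
  have k1iF2 := conj_swap g.relK1 g.relK1' g.relK1F2 hz2n
  have k2iF1 := conj_swap g.relK2 g.relK2' g.relK2F1 hz2n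
  have k2iF2 := conj_swap g.relK2 g.relK2' g.relK2F2 hz4n'
  -- K-K ordering
  have kk21 : g.K2 * g.K1 = g.K1 * g.K2 := g.relK12.symm
  have kk21i : g.K2 * g.K1i = g.K1i * g.K2 := g.relK1i2.symm
  have kk2i1 : g.K2i * g.K1 = g.K1 * g.K2i := g.relK12i.symm
  have kk2i1i : g.K2i * g.K1i = g.K1i * g.K2i := g.relK1i2i.symm
  -- E-F straightening
  have eF11 : g.E1 * g.F1 = g.F1 * g.E1 + (q - q⁻¹)⁻¹ • g.K1 - (q - q⁻¹)⁻¹ • g.K1i := by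
    have h := g.relE1F1
    rw [sub_eq_iff_eq_add] at h
    rw [h, smul_sub]; abel
  have eF22 : g.E2 * g.F2 = g.F2 * g.E2
      + (q ^ (2:ℤ) - q ^ (-2:ℤ))⁻¹ • g.K2 - (q ^ (2:ℤ) - q ^ (-2:ℤ))⁻¹ • g.K2i := by
    have h := g.relE2F2
    rw [sub_eq_iff_eq_add] at h
    rw [h, smul_sub]; abel
  refine ⟨?_, ?_, ?_, ?_⟩ <;>
  · simp only [Eb1, Eb2, Eb3, Eb4, sEb1, sEb2, sEb3, sEb4, pow_two,
      mul_add, add_mul, mul_sub, sub_mul, smul_mul_assoc, mul_smul_comm, smul_smul,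
      smul_add, smul_sub, mul_assoc, one_mul, mul_one,
      g.relK1E1, g.relK1E2, g.relK2E1, g.relK2E2,
      g.relK1F1, g.relK1F2, g.relK2F1, g.relK2F2,
      k1iE1, k1iE2, k2iE1, k2iE2, k1iF1, k1iF2, k2iF1, k2iF2,
      kk21, kk21i, kk2i1, kk2i1i,
      g.relK1, g.relK1', g.relK2, g.relK2',
      eF11, eF22, g.relE1F2, g.relE2F1,
      mulx g.relK1E1, mulx g.relK1E2, mulx g.relK2E1, mulx g.relK2E2,
      mulx g.relK1F1, mulx g.relK1F2, mulx g.relK2F1, mulx g.relK2F2,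
      mulx k1iE1, mulx k1iE2, mulx k2iE1, mulx k2iE2,
      mulx k1iF1, mulx k1iF2, mulx k2iF1, mulx k2iF2,
      mulx kk21, mulx kk21i, mulx kk2i1, mulx kk2i1i,
      mulx g.relK1, mulx g.relK1', mulx g.relK2, mulx g.relK2',
      mulx eF11, mulx eF22, mulx g.relE1F2, mulx g.relE2F1]
    match_scalars <;>
      (try simp only [hqn2, hz2, hz2', hz4, hz4', e1, e2, e4]) <;>
      field_simp <;>
      ring
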